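/- Let q be a prime power, let r ≥ 2 and 0 < j < r be integers, and let α_1, …, α_r be rational numbers with α_i ≥ 1 for every i; set α = ∑_{i=1}^r α_i. For every ε > 0 there exists a constant C > 0, depending only on q, r, j, and α_1, …, α_r, such that the following holds for all integers 1 ≤ k ≤ n and every probability mass function W on 𝔽_q^n satisfying ∑_{x ∈ 𝔽_q^n} W(x)^α ≤ q^{−(α−1)(n−k+εn)}: q^{n(α−1)−kα} · ((q^k − 1)/(q^n − 1))^{r−j} · ∑_{y ∈ 𝔽_q^n} ∑ ∏_{i=1}^r W(y − c_i)^{α_i} ≤ C · q^{−εn}, where the inner sum is over all ordered r-tuples (c_1,…,c_r) of pairwise distinct nonzero vectors of 𝔽_q^n whose 𝔽_q-linear span has dimension exactly r − j. -/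

import Mathlib

open scoped Classical
open Finset

lemma rpow_finset_sum {b : ℝ} (hb : 0 < b) {ι : Type*} (s : Finset ι) (f : ι → ℝ) :
    b ^ (∑ i ∈ s, f i) = ∏ i ∈ s, b ^ (f i) := by
  classical
  induction s using Finset.cons_induction with
  | empty => simp
  | cons a s ha ih => rw [Finset.sum_cons, Finset.prod_cons, Real.rpow_add hb, ih]

/-- Hölder interpolation of moments of a PMF. -/
lemma interp_moment {ι : Type*} [Fintype ι] (W : ι → ℝ) (hW : ∀ x, 0 ≤ W x)
    (h1 : ∑ x, W x = 1) {β p : ℝ} (hβ1 : 1 ≤ β) (hβp : β ≤ p) (hp : 1 < p) :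
    ∑ x, W x ^ β ≤ (∑ x, W x ^ p) ^ ((β - 1) / (p - 1)) := by
  classical
  set A := ∑ x, W x ^ p with hA
  have hx0 : ∃ x, W x ≠ 0 := by
    by_contra h
    push_neg at h
    rw [Finset.sum_eq_zero (fun x _ => h x)] at h1
    exact zero_ne_one h1
  obtain ⟨x0, hx0⟩ := hx0
  have hApos : 0 < A := by
    have h1' : 0 < W x0 ^ p := Real.rpow_pos_of_pos (lt_of_le_of_ne (hW x0) (Ne.symm hx0)) p
    exact lt_of_lt_of_le h1' (Finset.single_le_sum (fun x _ => Real.rpow_nonneg (hW x) p)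
      (Finset.mem_univ x0))
  set θ : ℝ := (p - β) / (p - 1) with hθ
  have hp1 : (0:ℝ) < p - 1 := by linarith
  have hθ0 : 0 ≤ θ := div_nonneg (by linarith) hp1.le
  have hθ1 : 1 - θ = (β - 1) / (p - 1) := by
    rw [hθ]
    field_simp
    ring
  have hθ1' : 0 ≤ 1 - θ := by rw [hθ1]; exact div_nonneg (by linarith) hp1.le
  -- pointwise bound
  have key : ∀ x, W x ^ β ≤ (θ * W x + (1 - θ) * (W x ^ p / A)) * A ^ (1 - θ) := by
    intro x
    rcases eq_or_lt_of_le (hW x) with h0 | h0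
    · have hWx : W x = 0 := h0.symm
      rw [hWx, Real.zero_rpow (ne_of_gt (by linarith : (0:ℝ) < β))]
      have hz : (0:ℝ) ^ p = 0 := Real.zero_rpow (ne_of_gt (by linarith : (0:ℝ) < p))
      rw [hz]
      simp
    · have heq : W x ^ β = (W x) ^ θ * ((W x ^ p / A) ^ (1 - θ)) * A ^ (1 - θ) := by
        rw [Real.div_rpow (Real.rpow_nonneg (hW x) p) hApos.le]
        rw [mul_assoc, div_mul_cancel₀ _ (ne_of_gt (Real.rpow_pos_of_pos hApos _))]
        rw [← Real.rpow_mul (hW x), ← Real.rpow_add h0]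
        congr 1
        rw [hθ1, hθ]
        field_simp
        ring
      rw [heq]
      have := Real.geom_mean_le_arith_mean2_weighted hθ0 hθ1' (hW x)
        (by positivity : (0:ℝ) ≤ W x ^ p / A) (by ring : θ + (1 - θ) = 1)
      exact mul_le_mul_of_nonneg_right this (Real.rpow_nonneg hApos.le _)
  calc ∑ x, W x ^ β ≤ ∑ x, (θ * W x + (1 - θ) * (W x ^ p / A)) * A ^ (1 - θ) :=
        Finset.sum_le_sum (fun x _ => key x)
    _ = (θ * (∑ x, W x) + (1 - θ) * (A / A)) * A ^ (1 - θ) := by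
        rw [← Finset.sum_mul]
        congr 1
        rw [Finset.sum_add_distrib, ← Finset.mul_sum, ← Finset.mul_sum, ← Finset.sum_div]
    _ = A ^ (1 - θ) := by
        rw [h1, div_self hApos.ne', mul_one, mul_one]
        ring_nf
    _ = A ^ ((β - 1) / (p - 1)) := by rw [hθ1]

/-- Lower bound on the `p`-th moment of a PMF on a finite set. -/
lemma moment_lower {ι : Type*} [Fintype ι] [Nonempty ι] (W : ι → ℝ) (hW : ∀ x, 0 ≤ W x)
    (h1 : ∑ x, W x = 1) {p : ℝ} (hp : 1 ≤ p) :
    ((Fintype.card ι : ℝ)) ^ (1 - p) ≤ ∑ x, W x ^ p := by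
  classical
  set N : ℝ := (Fintype.card ι : ℝ) with hN
  have hNpos : 0 < N := by
    simp only [hN]
    exact_mod_cast Fintype.card_pos
  have key := Real.rpow_arith_mean_le_arith_mean_rpow Finset.univ (fun _ => 1 / N) W
    (fun i _ => by positivity) (by
      rw [Finset.sum_const, Finset.card_univ, nsmul_eq_mul]
      field_simp
      exact hN.symm) (fun i _ => hW i) hp
  have h2 : (1/N) ^ p ≤ (1/N) * ∑ x, W x ^ p := by
    calc (1/N)^p = (∑ i, (1/N) * W i)^p := by rw [← Finset.mul_sum, h1, mul_one]
      _ ≤ ∑ i, (1/N) * W i ^ p := by simpa using key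
      _ = (1/N) * ∑ x, W x ^ p := by rw [Finset.mul_sum]
  have h3 : N * (1/N)^p ≤ ∑ x, W x ^ p := by
    have h4 := mul_le_mul_of_nonneg_left h2 hNpos.le
    rwa [← mul_assoc, mul_one_div_cancel hNpos.ne', one_mul] at h4
  have e1 : (1/N)^p = (N^p)⁻¹ := by rw [one_div, Real.inv_rpow hNpos.le]
  calc N ^ (1 - p) = N * (N^p)⁻¹ := by
        rw [show (1:ℝ) - p = 1 + (-p) by ring, Real.rpow_add hNpos, Real.rpow_one,
          Real.rpow_neg hNpos.le]
    _ = N * (1/N)^p := by rw [e1]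
    _ ≤ ∑ x, W x ^ p := h3


set_option maxHeartbeats 2000000

section Decomp

variable {F : Type} [Field F] {V : Type} [AddCommGroup V] [Module F V]

/-- From an injective tuple whose span has rank `d`, extract an index set `I` of
size `d` together with coefficients expressing every other vector in terms of
the vectors indexed by `I`. -/
lemma exists_decomp {r d : ℕ} (c : Fin r → V) (hinj : Function.Injective c)
    (hrank : Module.finrank F (Submodule.span F (Set.range c)) = d) :
    ∃ I : Finset (Fin r), I.card = d ∧
      ∃ L : Fin r → Fin r → F, ∀ i ∉ I, c i = ∑ m ∈ I, L i m • c m := by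
  classical
  obtain ⟨b, hbsub, hbspan, hbli⟩ := exists_linearIndependent F (Set.range c)
  have hbfin : b.Finite := (Set.finite_range c).subset hbsub
  haveI : Fintype b := hbfin.fintype
  have hcardb : b.toFinset.card = d := by
    have h := finrank_span_set_eq_card hbli
    rw [hbspan, hrank] at h
    exact h.symm
  set I : Finset (Fin r) := Finset.univ.filter (fun i => c i ∈ b) with hI
  have himg : I.image c = b.toFinset := by
    ext v
    simp only [Finset.mem_image, hI, Finset.mem_filter, Finset.mem_univ, true_and,
      Set.mem_toFinset]
    constructor
    · rintro ⟨i, hib, rfl⟩; exact hib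
    · intro hv
      obtain ⟨i, rfl⟩ := hbsub hv
      exact ⟨i, hv, rfl⟩
  have hcard : I.card = d := by
    rw [← hcardb, ← himg]
    exact (Finset.card_image_of_injective I hinj).symm
  refine ⟨I, hcard, ?_⟩
  have hmem : ∀ i : Fin r, c i ∈ Submodule.span F (↑b.toFinset : Set V) := by
    intro i
    rw [Set.coe_toFinset, hbspan]
    exact Submodule.subset_span (Set.mem_range_self i)
  have hex : ∀ i : Fin r, ∃ f : V → F, ∑ v ∈ b.toFinset, f v • v = c i := by
    intro i
    obtain ⟨f, -, hf⟩ := Submodule.mem_span_finset.mp (hmem i)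
    exact ⟨f, hf⟩
  choose f hf using hex
  refine ⟨fun i m => f i (c m), ?_⟩
  intro i _
  rw [← hf i, ← himg, Finset.sum_image (fun x _ y _ hxy => hinj hxy)]

end Decomp

section CoV
variable {F : Type} [Field F] {V : Type} [AddCommGroup V] [Module F V] [Fintype V]

lemma sum_comp_affine (f : V → ℝ) {u : F} (hu : u ≠ 0) (w : V) :
    ∑ v : V, f (u • v + w) = ∑ v : V, f v := by
  exact Equiv.sum_comp
    ⟨fun v => u • v + w, fun v => u⁻¹ • (v - w),
      by intro v; simp [smul_smul, inv_mul_cancel₀ hu],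
      by intro v; simp [smul_smul, mul_inv_cancel₀ hu]⟩ f

variable {κ : Type} [Fintype κ] [DecidableEq κ]

lemma sum_comp_update (f : (κ → V) → ℝ) (lam : κ → F) (m0 : κ) (h0 : lam m0 ≠ 0) :
    ∑ x : κ → V, f (Function.update x m0 (∑ m, lam m • x m)) = ∑ x : κ → V, f x := by
  classical
  set Φ : (κ → V) → (κ → V) := fun x => Function.update x m0 (∑ m, lam m • x m) with hΦ
  set Ψ : (κ → V) → (κ → V) := fun x =>
    Function.update x m0 ((lam m0)⁻¹ • (x m0 - ∑ m ∈ Finset.univ.erase m0, lam m • x m)) with hΨ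
  have split : ∀ x : κ → V, ∑ m, lam m • x m
      = lam m0 • x m0 + ∑ m ∈ Finset.univ.erase m0, lam m • x m := by
    intro x
    exact (Finset.add_sum_erase Finset.univ (fun m => lam m • x m) (Finset.mem_univ m0)).symm
  have li : Function.LeftInverse Ψ Φ := by
    intro x
    funext m
    by_cases hm : m = m0
    · subst hm
      simp only [hΨ, hΦ, Function.update_self]
      have h1 : ∀ m' ∈ Finset.univ.erase m, lam m' • (Function.update x m (∑ m'', lam m'' • x m'')) m' = lam m' • x m' := by
        intro m' hm'
        rw [Function.update_of_ne (Finset.ne_of_mem_erase hm')]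
      rw [Finset.sum_congr rfl h1, split, add_sub_cancel_right, smul_smul,
        inv_mul_cancel₀ h0, one_smul]
    · simp only [hΨ, hΦ, Function.update_of_ne hm]
  have ri : Function.RightInverse Ψ Φ := by
    intro x
    funext m
    by_cases hm : m = m0
    · subst hm
      simp only [hΨ, hΦ, Function.update_self]
      rw [split]
      have h1 : ∀ m' ∈ Finset.univ.erase m, lam m' • (Function.update x m ((lam m)⁻¹ • (x m - ∑ m'' ∈ Finset.univ.erase m, lam m'' • x m''))) m' = lam m' • x m' := by
        intro m' hm'
        rw [Function.update_of_ne (Finset.ne_of_mem_erase hm')]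
      rw [Finset.sum_congr rfl h1, Function.update_self, smul_smul, mul_inv_cancel₀ h0,
        one_smul, sub_add_cancel]
    · simp only [hΨ, hΦ, Function.update_of_ne hm]
  exact Equiv.sum_comp ⟨Φ, Ψ, li, ri⟩ f

end CoV

lemma sum_comp_sub {V : Type} [AddCommGroup V] [Fintype V] {κ : Type} [Fintype κ] [DecidableEq κ]
    (f : (κ → V) → ℝ) (y : V) :
    ∑ x : κ → V, f (fun m => y - x m) = ∑ x : κ → V, f x := by
  exact Equiv.sum_comp
    (Function.Involutive.toPerm (fun x => fun m => y - x m)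
      (by intro x; funext m; simp)) f

noncomputable def Dmap {F : Type} [Field F] {V : Type} [AddCommGroup V] [Module F V]
    {r : ℕ} (I : Finset (Fin r)) (lam : Fin r → Fin r → F)
    (g : {i : Fin r // i ∈ I} → V) (i : Fin r) : V :=
  if h : i ∈ I then g ⟨i, h⟩ else ∑ m : {i : Fin r // i ∈ I}, lam i ↑m • g m

section Core
variable {F : Type} [Field F] {V : Type} [AddCommGroup V] [Module F V] [Fintype V]

/-- Analytic core bound for a fixed index set and coefficient matrix. -/
lemma core_bound (W : V → ℝ) (hW : ∀ v, 0 ≤ W v)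
    {r : ℕ} (a : Fin r → ℝ) (ha : ∀ i, 1 ≤ a i)
    (A : ℝ) (hA : ∑ i, a i = A)
    (Q t : ℝ) (hQ : 1 < Q) (ht : 0 ≤ t)
    (hT : ∀ δ : ℝ, 1 ≤ δ → δ ≤ A → (∑ v : V, W v ^ δ) ≤ Q ^ (-((δ - 1) * t)))
    (I : Finset (Fin r)) (hInep : I.Nonempty) (hIne : Iᶜ.Nonempty)
    (lam : Fin r → Fin r → F) :
    ∑ y : V, ∑ g : {i : Fin r // i ∈ I} → V, ∏ i, W (y - Dmap I lam g i) ^ a i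
      ≤ Q ^ (-((A - I.card - 1) * t)) + (Fintype.card V : ℝ) * Q ^ (-((A - I.card) * t)) := by
  classical
  have hQ0 : (0:ℝ) < Q := lt_trans zero_lt_one hQ
  set T : ℝ → ℝ := fun δ => ∑ v : V, W v ^ δ with hTdef
  have hTnn : ∀ δ, 0 ≤ T δ := fun δ => Finset.sum_nonneg (fun v _ => Real.rpow_nonneg (hW v) δ)
  have hann : ∀ i, (0:ℝ) ≤ a i := fun i => le_trans zero_le_one (ha i)
  have haA : ∀ i, a i ≤ A := by
    intro i
    rw [← hA]
    exact Finset.single_le_sum (fun i _ => hann i) (Finset.mem_univ i)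
  set d : ℝ := (I.card : ℝ) with hd
  set aI : ℝ := ∑ m : {i : Fin r // i ∈ I}, a ↑m with haI
  set β : ℝ := ∑ i ∈ Iᶜ, a i with hβ
  have haIeq : aI = ∑ i ∈ I, a i := Finset.sum_coe_sort I a
  have hsplitA : aI + β = A := by
    rw [haIeq, hβ, ← hA]
    exact Finset.sum_add_sum_compl I a
  obtain ⟨i1, hi1⟩ := hIne
  have hβ1 : 1 ≤ β := le_trans (ha i1)
    (Finset.single_le_sum (fun i _ => hann i) hi1)
  have hβ0 : (0:ℝ) < β := lt_of_lt_of_le zero_lt_one hβ1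
  have haInn : 0 ≤ aI := by
    rw [haIeq]
    exact Finset.sum_nonneg (fun i _ => hann i)
  have hβA : β ≤ A := by linarith
  -- cardinality of the subtype
  have hcardκ : (Fintype.card {i : Fin r // i ∈ I} : ℝ) = d := by
    rw [hd, Fintype.card_coe]
  -- product of sums over the function space
  have prod_sums : ∀ h : {i : Fin r // i ∈ I} → V → ℝ,
      ∑ x : {i : Fin r // i ∈ I} → V, ∏ m, h m (x m) = ∏ m, ∑ v, h m v := by
    intro h
    rw [← Finset.sum_prod_piFinset Finset.univ h, Fintype.piFinset_univ]
  -- split the product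
  have prod_split : ∀ (y : V) (g : {i : Fin r // i ∈ I} → V),
      ∏ i, W (y - Dmap I lam g i) ^ a i
        = (∏ m : {i : Fin r // i ∈ I}, W (y - g m) ^ a ↑m) *
            ∏ i ∈ Iᶜ, W (y - ∑ m : {i : Fin r // i ∈ I}, lam i ↑m • g m) ^ a i := by
    intro y g
    rw [← Finset.prod_mul_prod_compl I (fun i => W (y - Dmap I lam g i) ^ a i)]
    congr 1
    · rw [← Finset.prod_coe_sort I (fun i => W (y - Dmap I lam g i) ^ a i)]
      refine Finset.prod_congr rfl ?_
      intro m _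
      have hD : Dmap I lam g ↑m = g m := by
        rw [Dmap, dif_pos m.2, Subtype.coe_eta]
      rw [hD]
    · refine Finset.prod_congr rfl ?_
      intro i hi
      have hD : Dmap I lam g i = ∑ m : {i : Fin r // i ∈ I}, lam i ↑m • g m := by
        rw [Dmap, dif_neg (Finset.mem_compl.mp hi)]
      rw [hD]
  -- abbreviation for the linear combination
  set Lin : Fin r → ({i : Fin r // i ∈ I} → V) → V :=
    fun i g => ∑ m : {i : Fin r // i ∈ I}, lam i ↑m • g m with hLin
  set P : V → ({i : Fin r // i ∈ I} → V) → ℝ :=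
    fun y g => ∏ m : {i : Fin r // i ∈ I}, W (y - g m) ^ a ↑m with hP
  have hPnn : ∀ y g, 0 ≤ P y g :=
    fun y g => Finset.prod_nonneg (fun m _ => Real.rpow_nonneg (hW _) _)
  -- bound on products of moments
  have hTprod : ∀ (s : Finset {i : Fin r // i ∈ I}),
      ∏ m ∈ s, T (a ↑m) ≤ Q ^ (-((∑ m ∈ s, (a ↑m - 1)) * t)) := by
    intro s
    calc ∏ m ∈ s, T (a ↑m) ≤ ∏ m ∈ s, Q ^ (-((a ↑m - 1) * t)) :=
          Finset.prod_le_prod (fun m _ => hTnn _) (fun m _ => hT _ (ha ↑m) (haA ↑m))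
      _ = Q ^ (∑ m ∈ s, -((a ↑m - 1) * t)) := (rpow_finset_sum hQ0 _ _).symm
      _ = Q ^ (-((∑ m ∈ s, (a ↑m - 1)) * t)) := by
          congr 1
          rw [Finset.sum_mul, ← Finset.sum_neg_distrib]
  have hsum_univ : ∑ m : {i : Fin r // i ∈ I}, (a ↑m - 1) = aI - d := by
    rw [Finset.sum_sub_distrib, Finset.sum_const, Finset.card_univ, nsmul_eq_mul, mul_one,
      hcardκ, ← haI]
  set M : ℝ := Q ^ (-((A - d - 1) * t)) + (Fintype.card V : ℝ) * Q ^ (-((A - d) * t)) with hM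
  -- bound for each dependent index i0
  have B2claim : ∀ i0 ∈ Iᶜ, ∑ y : V, ∑ g : {i : Fin r // i ∈ I} → V,
      P y g * W (y - Lin i0 g) ^ β ≤ M := by
    intro i0 _
    set s : F := ∑ m : {i : Fin r // i ∈ I}, lam i0 ↑m with hs
    have cov : ∀ y : V, ∑ g : {i : Fin r // i ∈ I} → V, P y g * W (y - Lin i0 g) ^ β
        = ∑ x : {i : Fin r // i ∈ I} → V,
            (∏ m, W (x m) ^ a ↑m) * W ((1 - s) • y + Lin i0 x) ^ β := by
      intro y
      have hcc := sum_comp_sub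
        (f := fun x : {i : Fin r // i ∈ I} → V =>
          (∏ m, W (x m) ^ a ↑m) * W ((1 - s) • y + Lin i0 x) ^ β) y
      have alg : ∀ g : {i : Fin r // i ∈ I} → V,
          (1 - s) • y + Lin i0 (fun m => y - g m) = y - Lin i0 g := by
        intro g
        rw [hLin]
        simp only
        have e1 : ∑ m : {i : Fin r // i ∈ I}, lam i0 ↑m • (y - g m)
            = s • y - ∑ m : {i : Fin r // i ∈ I}, lam i0 ↑m • g m := by
          rw [hs, Finset.sum_smul]
          rw [← Finset.sum_sub_distrib]
          refine Finset.sum_congr rfl fun m _ => ?_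
          rw [smul_sub]
        rw [e1, sub_smul, one_smul]
        abel
      refine Eq.trans ?_ hcc
      refine Finset.sum_congr rfl fun g _ => ?_
      show P y g * W (y - Lin i0 g) ^ β
          = (∏ m, W (y - g m) ^ a ↑m) * W ((1 - s) • y + Lin i0 (fun m => y - g m)) ^ β
      rw [alg g, hP]
    by_cases hseq : s = (1 : F)
    · -- degenerate case: the combination is a genuine convex combination
      obtain ⟨m0, hm0⟩ : ∃ m0 : {i : Fin r // i ∈ I}, lam i0 ↑m0 ≠ 0 := by
        by_contra hcon
        push_neg at hcon
        have : s = 0 := Finset.sum_eq_zero fun m _ => hcon m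
        rw [hseq] at this
        exact one_ne_zero this
      set γ : ℝ := a ↑m0 + β with hγ
      have hγ0 : (0:ℝ) < γ := by
        have := ha ↑m0
        linarith
      have hγ1 : 1 ≤ γ := by
        have := ha ↑m0
        linarith
      have hγA : γ ≤ A := by
        have h1 : a ↑m0 ≤ aI := by
          rw [haI]
          exact Finset.single_le_sum (f := fun m : {i : Fin r // i ∈ I} => a ↑m)
            (fun m _ => hann ↑m) (Finset.mem_univ m0)
        linarith
      -- the special product-of-moments function
      set h : {i : Fin r // i ∈ I} → V → ℝ :=
        fun m v => if m = m0 then W v ^ γ else W v ^ a ↑m with hh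
      have hprod_h : ∀ x : {i : Fin r // i ∈ I} → V,
          (∏ m ∈ Finset.univ.erase m0, W (x m) ^ a ↑m) * W (x m0) ^ γ
            = ∏ m, h m (x m) := by
        intro x
        rw [← Finset.mul_prod_erase Finset.univ (fun m => h m (x m)) (Finset.mem_univ m0)]
        rw [hh]
        simp only [if_pos rfl]
        rw [mul_comm]
        congr 1
        refine Finset.prod_congr rfl fun m hm => ?_
        rw [if_neg (Finset.ne_of_mem_erase hm)]
      have hE1 : ∑ x : {i : Fin r // i ∈ I} → V,
          (∏ m ∈ Finset.univ.erase m0, W (x m) ^ a ↑m) * W (x m0) ^ γ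
            = T γ * ∏ m ∈ Finset.univ.erase m0, T (a ↑m) := by
        calc ∑ x : {i : Fin r // i ∈ I} → V,
            (∏ m ∈ Finset.univ.erase m0, W (x m) ^ a ↑m) * W (x m0) ^ γ
            = ∑ x : {i : Fin r // i ∈ I} → V, ∏ m, h m (x m) :=
              Finset.sum_congr rfl fun x _ => hprod_h x
          _ = ∏ m, ∑ v, h m v := prod_sums h
          _ = (∑ v, h m0 v) * ∏ m ∈ Finset.univ.erase m0, ∑ v, h m v :=
              (Finset.mul_prod_erase Finset.univ _ (Finset.mem_univ m0)).symm
          _ = T γ * ∏ m ∈ Finset.univ.erase m0, T (a ↑m) := by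
              congr 1
              · rw [hh]
                simp [hTdef]
              · refine Finset.prod_congr rfl fun m hm => ?_
                rw [hh]
                simp [Finset.ne_of_mem_erase hm, hTdef]
      have hE2 : ∑ x : {i : Fin r // i ∈ I} → V,
          (∏ m ∈ Finset.univ.erase m0, W (x m) ^ a ↑m) * W (Lin i0 x) ^ γ
            = T γ * ∏ m ∈ Finset.univ.erase m0, T (a ↑m) := by
        have hcu := sum_comp_update
          (f := fun x : {i : Fin r // i ∈ I} → V =>
            (∏ m ∈ Finset.univ.erase m0, W (x m) ^ a ↑m) * W (x m0) ^ γ)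
          (fun m => lam i0 ↑m) m0 hm0
        have e : ∀ x : {i : Fin r // i ∈ I} → V,
            (∏ m ∈ Finset.univ.erase m0,
                W ((Function.update x m0 (∑ m : {i : Fin r // i ∈ I}, lam i0 ↑m • x m)) m) ^ a ↑m) *
              W ((Function.update x m0 (∑ m : {i : Fin r // i ∈ I}, lam i0 ↑m • x m)) m0) ^ γ
            = (∏ m ∈ Finset.univ.erase m0, W (x m) ^ a ↑m) * W (Lin i0 x) ^ γ := by
          intro x
          congr 1
          · refine Finset.prod_congr rfl fun m hm => ?_
            rw [Function.update_of_ne (Finset.ne_of_mem_erase hm)]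
          · rw [Function.update_self]
        rw [← hE1]
        exact (Finset.sum_congr rfl (fun x _ => (e x).symm)).trans hcu
      -- pointwise AM-GM with two terms
      have hpt : ∀ x : {i : Fin r // i ∈ I} → V,
          (∏ m, W (x m) ^ a ↑m) * W (Lin i0 x) ^ β
            ≤ (∏ m ∈ Finset.univ.erase m0, W (x m) ^ a ↑m) *
                ((a ↑m0 / γ) * W (x m0) ^ γ + (β / γ) * W (Lin i0 x) ^ γ) := by
        intro x
        have key : W (x m0) ^ a ↑m0 * W (Lin i0 x) ^ β
            ≤ (a ↑m0 / γ) * W (x m0) ^ γ + (β / γ) * W (Lin i0 x) ^ γ := by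
          have hgm := Real.geom_mean_le_arith_mean2_weighted
            (div_nonneg (hann ↑m0) hγ0.le) (div_nonneg hβ0.le hγ0.le)
            (Real.rpow_nonneg (hW (x m0)) γ) (Real.rpow_nonneg (hW (Lin i0 x)) γ)
            (by field_simp; exact hγ.symm)
          calc W (x m0) ^ a ↑m0 * W (Lin i0 x) ^ β
              = (W (x m0) ^ γ) ^ (a ↑m0 / γ) * (W (Lin i0 x) ^ γ) ^ (β / γ) := by
                rw [← Real.rpow_mul (hW (x m0)), ← Real.rpow_mul (hW (Lin i0 x))]
                congr 2
                · field_simp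
                · field_simp
            _ ≤ _ := hgm
        have hsplit2 : (∏ m, W (x m) ^ a ↑m) * W (Lin i0 x) ^ β
            = (∏ m ∈ Finset.univ.erase m0, W (x m) ^ a ↑m) *
                (W (x m0) ^ a ↑m0 * W (Lin i0 x) ^ β) := by
          rw [← Finset.mul_prod_erase Finset.univ (fun m => W (x m) ^ a ↑m)
            (Finset.mem_univ m0)]
          ring
        rw [hsplit2]
        exact mul_le_mul_of_nonneg_left key
          (Finset.prod_nonneg fun m _ => Real.rpow_nonneg (hW _) _)
      -- put the degenerate case together
      have hinner : ∑ x : {i : Fin r // i ∈ I} → V,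
          (∏ m, W (x m) ^ a ↑m) * W (Lin i0 x) ^ β
            ≤ T γ * ∏ m ∈ Finset.univ.erase m0, T (a ↑m) := by
        calc ∑ x : {i : Fin r // i ∈ I} → V, (∏ m, W (x m) ^ a ↑m) * W (Lin i0 x) ^ β
            ≤ ∑ x : {i : Fin r // i ∈ I} → V,
                (∏ m ∈ Finset.univ.erase m0, W (x m) ^ a ↑m) *
                  ((a ↑m0 / γ) * W (x m0) ^ γ + (β / γ) * W (Lin i0 x) ^ γ) :=
              Finset.sum_le_sum fun x _ => hpt x
          _ = (a ↑m0 / γ) * (∑ x : {i : Fin r // i ∈ I} → V,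
                  (∏ m ∈ Finset.univ.erase m0, W (x m) ^ a ↑m) * W (x m0) ^ γ)
              + (β / γ) * (∑ x : {i : Fin r // i ∈ I} → V,
                  (∏ m ∈ Finset.univ.erase m0, W (x m) ^ a ↑m) * W (Lin i0 x) ^ γ) := by
              rw [Finset.mul_sum, Finset.mul_sum, ← Finset.sum_add_distrib]
              refine Finset.sum_congr rfl fun x _ => ?_
              ring
          _ = (a ↑m0 / γ) * (T γ * ∏ m ∈ Finset.univ.erase m0, T (a ↑m))
              + (β / γ) * (T γ * ∏ m ∈ Finset.univ.erase m0, T (a ↑m)) := by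
              rw [hE1, hE2]
          _ = T γ * ∏ m ∈ Finset.univ.erase m0, T (a ↑m) := by
              have hcc : a ↑m0 / γ + β / γ = 1 := by
                field_simp [hγ]
                exact hγ.symm
              rw [← add_mul, hcc, one_mul]
      have hTbound : T γ * ∏ m ∈ Finset.univ.erase m0, T (a ↑m) ≤ Q ^ (-((A - d) * t)) := by
        have h1 : T γ ≤ Q ^ (-((γ - 1) * t)) := hT γ hγ1 hγA
        have h2 : ∏ m ∈ Finset.univ.erase m0, T (a ↑m)
            ≤ Q ^ (-((∑ m ∈ Finset.univ.erase m0, (a ↑m - 1)) * t)) :=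
          hTprod (Finset.univ.erase m0)
        have h3 : ∑ m ∈ Finset.univ.erase m0, (a ↑m - 1) = (aI - d) - (a ↑m0 - 1) := by
          have := Finset.add_sum_erase Finset.univ
            (fun m : {i : Fin r // i ∈ I} => a ↑m - 1) (Finset.mem_univ m0)
          rw [hsum_univ] at this
          have h4 : a ↑m0 - 1 + ∑ m ∈ Finset.univ.erase m0, (a ↑m - 1) = aI - d := by
            simpa using this
          linarith
        calc T γ * ∏ m ∈ Finset.univ.erase m0, T (a ↑m)
            ≤ Q ^ (-((γ - 1) * t)) * Q ^ (-((∑ m ∈ Finset.univ.erase m0, (a ↑m - 1)) * t)) :=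
              mul_le_mul h1 h2 (Finset.prod_nonneg fun m _ => hTnn _)
                (Real.rpow_nonneg hQ0.le _)
          _ = Q ^ (-((A - d) * t)) := by
              rw [← Real.rpow_add hQ0, h3]
              congr 1
              rw [hγ]
              linear_combination (-t) * hsplitA
      calc ∑ y : V, ∑ g : {i : Fin r // i ∈ I} → V, P y g * W (y - Lin i0 g) ^ β
          = ∑ y : V, ∑ x : {i : Fin r // i ∈ I} → V,
              (∏ m, W (x m) ^ a ↑m) * W ((1 - s) • y + Lin i0 x) ^ β :=
            Finset.sum_congr rfl fun y _ => cov y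
        _ = ∑ y : V, ∑ x : {i : Fin r // i ∈ I} → V,
              (∏ m, W (x m) ^ a ↑m) * W (Lin i0 x) ^ β := by
            refine Finset.sum_congr rfl fun y _ => Finset.sum_congr rfl fun x _ => ?_
            rw [hseq, sub_self, zero_smul, zero_add]
        _ = (Fintype.card V : ℝ) * ∑ x : {i : Fin r // i ∈ I} → V,
              (∏ m, W (x m) ^ a ↑m) * W (Lin i0 x) ^ β := by
            rw [Finset.sum_const, Finset.card_univ, nsmul_eq_mul]
        _ ≤ (Fintype.card V : ℝ) * (T γ * ∏ m ∈ Finset.univ.erase m0, T (a ↑m)) := by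
            refine mul_le_mul_of_nonneg_left hinner (by positivity)
        _ ≤ (Fintype.card V : ℝ) * Q ^ (-((A - d) * t)) := by
            refine mul_le_mul_of_nonneg_left hTbound (by positivity)
        _ ≤ M := by
            rw [hM]
            have : (0:ℝ) ≤ Q ^ (-((A - d - 1) * t)) := Real.rpow_nonneg hQ0.le _
            linarith
    · -- generic case: the `y`-sum can be reparametrized
      have hu : (1 : F) - s ≠ 0 := sub_ne_zero.mpr (Ne.symm hseq)
      have hTbound : T β * ∏ m : {i : Fin r // i ∈ I}, T (a ↑m)
          ≤ Q ^ (-((A - d - 1) * t)) := by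
        have h1 : T β ≤ Q ^ (-((β - 1) * t)) := hT β hβ1 hβA
        have h2 : ∏ m : {i : Fin r // i ∈ I}, T (a ↑m)
            ≤ Q ^ (-((aI - d) * t)) := by
          have := hTprod Finset.univ
          rwa [hsum_univ] at this
        calc T β * ∏ m : {i : Fin r // i ∈ I}, T (a ↑m)
            ≤ Q ^ (-((β - 1) * t)) * Q ^ (-((aI - d) * t)) :=
              mul_le_mul h1 h2 (Finset.prod_nonneg fun m _ => hTnn _)
                (Real.rpow_nonneg hQ0.le _)
          _ = Q ^ (-((A - d - 1) * t)) := by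
              rw [← Real.rpow_add hQ0]
              congr 1
              linear_combination (-t) * hsplitA
      calc ∑ y : V, ∑ g : {i : Fin r // i ∈ I} → V, P y g * W (y - Lin i0 g) ^ β
          = ∑ y : V, ∑ x : {i : Fin r // i ∈ I} → V,
              (∏ m, W (x m) ^ a ↑m) * W ((1 - s) • y + Lin i0 x) ^ β :=
            Finset.sum_congr rfl fun y _ => cov y
        _ = ∑ x : {i : Fin r // i ∈ I} → V,
              ∑ y : V, (∏ m, W (x m) ^ a ↑m) * W ((1 - s) • y + Lin i0 x) ^ β :=
            Finset.sum_comm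
        _ = ∑ x : {i : Fin r // i ∈ I} → V, (∏ m, W (x m) ^ a ↑m) * T β := by
            refine Finset.sum_congr rfl fun x _ => ?_
            rw [← Finset.mul_sum]
            congr 1
            exact sum_comp_affine (f := fun v => W v ^ β) hu (Lin i0 x)
        _ = T β * ∏ m : {i : Fin r // i ∈ I}, T (a ↑m) := by
            rw [← Finset.sum_mul, mul_comm]
            congr 1
            exact prod_sums (fun m v => W v ^ a ↑m)
        _ ≤ Q ^ (-((A - d - 1) * t)) := hTbound
        _ ≤ M := by
            rw [hM]
            have : (0:ℝ) ≤ (Fintype.card V : ℝ) * Q ^ (-((A - d) * t)) := by positivity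
            linarith
  -- AM-GM over the dependent indices
  have amgm : ∀ (y : V) (g : {i : Fin r // i ∈ I} → V),
      ∏ i ∈ Iᶜ, W (y - Lin i g) ^ a i ≤ ∑ i ∈ Iᶜ, (a i / β) * W (y - Lin i g) ^ β := by
    intro y g
    have hgm := Real.geom_mean_le_arith_mean_weighted Iᶜ (fun i => a i / β)
      (fun i => W (y - Lin i g) ^ β) (fun i _ => div_nonneg (hann i) hβ0.le)
      (by rw [← Finset.sum_div, ← hβ, div_self hβ0.ne'])
      (fun i _ => Real.rpow_nonneg (hW _) β)
    calc ∏ i ∈ Iᶜ, W (y - Lin i g) ^ a i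
        = ∏ i ∈ Iᶜ, (W (y - Lin i g) ^ β) ^ (a i / β) := by
          refine Finset.prod_congr rfl fun i _ => ?_
          rw [← Real.rpow_mul (hW _)]
          congr 1
          field_simp
      _ ≤ _ := hgm
  -- put everything together
  calc ∑ y : V, ∑ g : {i : Fin r // i ∈ I} → V, ∏ i, W (y - Dmap I lam g i) ^ a i
      = ∑ y : V, ∑ g : {i : Fin r // i ∈ I} → V,
          P y g * ∏ i ∈ Iᶜ, W (y - Lin i g) ^ a i :=
        Finset.sum_congr rfl fun y _ => Finset.sum_congr rfl fun g _ => prod_split y g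
    _ ≤ ∑ y : V, ∑ g : {i : Fin r // i ∈ I} → V,
          P y g * ∑ i ∈ Iᶜ, (a i / β) * W (y - Lin i g) ^ β := by
        refine Finset.sum_le_sum fun y _ => Finset.sum_le_sum fun g _ => ?_
        exact mul_le_mul_of_nonneg_left (amgm y g) (hPnn y g)
    _ = ∑ i0 ∈ Iᶜ, (a i0 / β) *
          ∑ y : V, ∑ g : {i : Fin r // i ∈ I} → V, P y g * W (y - Lin i0 g) ^ β := by
        calc ∑ y : V, ∑ g : {i : Fin r // i ∈ I} → V,
              P y g * ∑ i ∈ Iᶜ, (a i / β) * W (y - Lin i g) ^ β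
            = ∑ y : V, ∑ g : {i : Fin r // i ∈ I} → V, ∑ i0 ∈ Iᶜ,
                (a i0 / β) * (P y g * W (y - Lin i0 g) ^ β) := by
              refine Finset.sum_congr rfl fun y _ => Finset.sum_congr rfl fun g _ => ?_
              rw [Finset.mul_sum]
              exact Finset.sum_congr rfl fun i0 _ => by ring
          _ = ∑ y : V, ∑ i0 ∈ Iᶜ, ∑ g : {i : Fin r // i ∈ I} → V,
                (a i0 / β) * (P y g * W (y - Lin i0 g) ^ β) :=
              Finset.sum_congr rfl fun y _ => Finset.sum_comm
          _ = ∑ i0 ∈ Iᶜ, ∑ y : V, ∑ g : {i : Fin r // i ∈ I} → V,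
                (a i0 / β) * (P y g * W (y - Lin i0 g) ^ β) := Finset.sum_comm
          _ = ∑ i0 ∈ Iᶜ, (a i0 / β) *
                ∑ y : V, ∑ g : {i : Fin r // i ∈ I} → V, P y g * W (y - Lin i0 g) ^ β := by
              refine Finset.sum_congr rfl fun i0 _ => ?_
              rw [Finset.mul_sum]
              exact Finset.sum_congr rfl fun y _ => (Finset.mul_sum _ _ _).symm
    _ ≤ ∑ i0 ∈ Iᶜ, (a i0 / β) * M := by
        refine Finset.sum_le_sum fun i0 hi0 => ?_
        exact mul_le_mul_of_nonneg_left (B2claim i0 hi0) (div_nonneg (hann i0) hβ0.le)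
    _ = M := by
        rw [← Finset.sum_mul, ← Finset.sum_div, ← hβ, div_self hβ0.ne', one_mul]

end Core


section Encode
variable {F : Type} [Field F] {V : Type} [AddCommGroup V] [Module F V]

lemma encode_bound [Fintype F] [Fintype V] {r d : ℕ} (filt : Finset (Fin r → V))
    (hfilt : ∀ c ∈ filt, Function.Injective c ∧
        Module.finrank F (Submodule.span F (Set.range c)) = d)
    (f : Fin r → V → ℝ) (hf : ∀ i v, 0 ≤ f i v) :
    ∑ c ∈ filt, ∏ i, f i (c i)
      ≤ ∑ I ∈ Finset.powersetCard d (Finset.univ : Finset (Fin r)),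
          ∑ lam : Fin r → Fin r → F,
            ∑ g : {i : Fin r // i ∈ I} → V, ∏ i, f i (Dmap I lam g i) := by
  classical
  have hdec : ∀ c ∈ filt, ∃ I : Finset (Fin r), I.card = d ∧
      ∃ L : Fin r → Fin r → F, ∀ i ∉ I, c i = ∑ m ∈ I, L i m • c m := by
    intro c hc
    exact exists_decomp c (hfilt c hc).1 (hfilt c hc).2
  choose IF₀ hIcard₀ LF₀ hrep₀ using hdec
  set IF : (Fin r → V) → Finset (Fin r) :=
    fun c => if h : c ∈ filt then IF₀ c h else ∅ with hIF
  set LF : (Fin r → V) → (Fin r → Fin r → F) :=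
    fun c => if h : c ∈ filt then LF₀ c h else 0 with hLF
  have hIcard : ∀ c ∈ filt, (IF c).card = d := by
    intro c hc; rw [hIF]; simp only [dif_pos hc]; exact hIcard₀ c hc
  have hrep : ∀ c (hc : c ∈ filt), ∀ i ∉ IF c, c i = ∑ m ∈ IF c, LF c i m • c m := by
    intro c hc; rw [hIF, hLF]; simp only [dif_pos hc]; exact hrep₀ c hc
  have step1 : ∑ c ∈ filt, ∏ i, f i (c i)
      = ∑ I ∈ Finset.powersetCard d (Finset.univ : Finset (Fin r)),
          ∑ c ∈ filt.filter (fun c => IF c = I), ∏ i, f i (c i) := by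
    refine (Finset.sum_fiberwise_of_maps_to ?_ _).symm
    intro c hc
    rw [Finset.mem_powersetCard_univ]
    exact hIcard c hc
  rw [step1]
  refine Finset.sum_le_sum ?_
  intro I hI
  set φ : (Fin r → V) → (Fin r → Fin r → F) × ({i : Fin r // i ∈ I} → V) :=
    fun c => (LF c, fun m => c ↑m) with hφ
  have hDecode : ∀ c ∈ filt.filter (fun c => IF c = I),
      ∀ i, Dmap I (LF c) (fun m : {i : Fin r // i ∈ I} => c ↑m) i = c i := by
    intro c hc i
    rcases Finset.mem_filter.mp hc with ⟨hcf, hIc⟩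
    unfold Dmap
    by_cases h : i ∈ I
    · rw [dif_pos h]
    · rw [dif_neg h]
      have h2 : ∑ m : {i : Fin r // i ∈ I}, LF c i ↑m • c ↑m = ∑ m ∈ I, LF c i m • c m :=
        Finset.sum_coe_sort I (fun m => LF c i m • c m)
      rw [h2, ← hIc]
      exact (hrep c hcf i (by rw [hIc]; exact h)).symm
  calc ∑ c ∈ filt.filter (fun c => IF c = I), ∏ i, f i (c i)
      = ∑ c ∈ filt.filter (fun c => IF c = I), ∏ i, f i (Dmap I (φ c).1 (φ c).2 i) := by
        refine Finset.sum_congr rfl ?_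
        intro c hc
        refine Finset.prod_congr rfl ?_
        intro i _
        rw [hφ]
        rw [hDecode c hc i]
    _ = ∑ p ∈ (filt.filter (fun c => IF c = I)).image φ, ∏ i, f i (Dmap I p.1 p.2 i) := by
        refine (Finset.sum_image (f := fun p => ∏ i, f i (Dmap I p.1 p.2 i)) (g := φ) ?_).symm
        intro x hx y hy hxy
        funext i
        have h1 : LF x = LF y := congrArg Prod.fst hxy
        have h2 : (fun m : {i : Fin r // i ∈ I} => x ↑m)
            = (fun m : {i : Fin r // i ∈ I} => y ↑m) := congrArg Prod.snd hxy
        rw [← hDecode x hx i, ← hDecode y hy i, h1, h2]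
    _ ≤ ∑ p : (Fin r → Fin r → F) × ({i : Fin r // i ∈ I} → V), ∏ i, f i (Dmap I p.1 p.2 i) := by
        refine Finset.sum_le_sum_of_subset_of_nonneg (Finset.subset_univ _) ?_
        intro p _ _
        exact Finset.prod_nonneg (fun i _ => hf _ _)
    _ = ∑ lam : Fin r → Fin r → F, ∑ g : {i : Fin r // i ∈ I} → V, ∏ i, f i (Dmap I lam g i) :=
        Fintype.sum_prod_type _


end Encode


/-- Lemma 3.3 (key component estimate): for fixed `r`, `0 < j < r`, rational
exponents `α_i ≥ 1` summing to `α`, and every `ε > 0`, there is a constant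
`C > 0` such that for all `1 ≤ k ≤ n` and every PMF `W` on `𝔽_q^n` satisfying
the rate condition `∑_x W(x)^α ≤ q^{-(α-1)(n-k+εn)}`, the contribution of
rank-`(r-j)` tuples to the smoothing bound is at most `C · q^{-εn}`. -/
theorem rank_deficient_component_bound
    (q : ℕ) (hq : IsPrimePow q)
    (F : Type) [Field F] [Fintype F] (hF : Fintype.card F = q)
    (r j : ℕ) (hr : 2 ≤ r) (hj0 : 0 < j) (hjr : j < r)
    (α' : Fin r → ℚ) (hα' : ∀ i, 1 ≤ α' i) (α : ℚ) (hα : ∑ i, α' i = α)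
    (ε : ℝ) (hε : 0 < ε) :
    ∃ C : ℝ, 0 < C ∧
      ∀ (n k : ℕ), 1 ≤ k → k ≤ n →
        ∀ W : (Fin n → F) → ℝ, (∀ x, 0 ≤ W x) → (∑ x : Fin n → F, W x = 1) →
          (∑ x : Fin n → F, W x ^ ((α : ℝ))
              ≤ (q : ℝ) ^ (-(((α : ℝ) - 1) * ((n : ℝ) - (k : ℝ) + ε * (n : ℝ))))) →
          (q : ℝ) ^ ((n : ℝ) * ((α : ℝ) - 1) - (k : ℝ) * (α : ℝ)) *
              (((q : ℝ) ^ k - 1) / ((q : ℝ) ^ n - 1)) ^ (r - j) *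
              ∑ y : Fin n → F,
                ∑ c ∈ Finset.univ.filter
                    (fun c : Fin r → (Fin n → F) =>
                      Function.Injective c ∧ (∀ i, c i ≠ 0) ∧
                        Module.finrank F (Submodule.span F (Set.range c)) = r - j),
                  ∏ i, W (y - c i) ^ ((α' i : ℝ))
            ≤ C * (q : ℝ) ^ (-(ε * (n : ℝ))) := by
  classical
  have hq2 : 2 ≤ q := hq.two_le
  have hQ1 : (1:ℝ) < (q:ℝ) := by exact_mod_cast lt_of_lt_of_le one_lt_two hq2
  have hQ0 : (0:ℝ) < (q:ℝ) := lt_trans zero_lt_one hQ1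
  set A : ℝ := ((α : ℝ)) with hAdef
  set a : Fin r → ℝ := fun i => ((α' i : ℝ)) with hadef
  have ha1 : ∀ i, 1 ≤ a i := fun i => by
    show (1:ℝ) ≤ ((α' i : ℝ))
    exact_mod_cast hα' i
  have hA_sum : ∑ i, a i = A := by
    rw [hadef, hAdef, ← hα]
    push_cast
    rfl
  have hr2 : (2:ℝ) ≤ (r:ℝ) := by exact_mod_cast hr
  have hAr : (r:ℝ) ≤ A := by
    rw [← hA_sum]
    calc (r:ℝ) = ∑ _i : Fin r, (1:ℝ) := by simp
      _ ≤ ∑ i, a i := Finset.sum_le_sum (fun i _ => ha1 i)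
  have hA1 : (1:ℝ) < A := by linarith
  set d' : ℕ := r - j with hd'def
  have hd'pos : 0 < d' := by omega
  have hd'lt : d' < r := by omega
  have hd'le : d' ≤ r := le_of_lt hd'lt
  have hdR : ((d' : ℕ) : ℝ) = (r:ℝ) - (j:ℝ) := by
    rw [hd'def]
    exact_mod_cast Nat.cast_sub hjr.le
  have hj1 : (1:ℝ) ≤ (j:ℝ) := by exact_mod_cast hj0
  have hchoose : (0:ℝ) < (r.choose d' : ℝ) := by exact_mod_cast Nat.choose_pos hd'le
  refine ⟨2 * (r.choose d' : ℝ) * (q:ℝ)^(r*r) * (q:ℝ)^r, ?_, ?_⟩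
  · have h2 : (0:ℝ) < (q:ℝ)^(r*r) := pow_pos hQ0 _
    have h3 : (0:ℝ) < (q:ℝ)^r := pow_pos hQ0 _
    positivity
  intro n k hk1 hkn W hW h1 hrate
  haveI : Nonempty (Fin n → F) := ⟨fun _ => 1⟩
  have hn1 : 1 ≤ n := le_trans hk1 hkn
  set t : ℝ := (n:ℝ) - (k:ℝ) + ε * (n:ℝ) with htdef
  have hkn' : (k:ℝ) ≤ (n:ℝ) := by exact_mod_cast hkn
  have hk1' : (1:ℝ) ≤ (k:ℝ) := by exact_mod_cast hk1
  have hn1' : (1:ℝ) ≤ (n:ℝ) := by exact_mod_cast hn1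
  have hεn0 : 0 ≤ ε * (n:ℝ) := mul_nonneg hε.le (by positivity)
  have ht0 : 0 ≤ t := by rw [htdef]; linarith
  -- cardinality of the ambient space
  have hcV : (Fintype.card (Fin n → F) : ℝ) = (q:ℝ) ^ ((n:ℝ)) := by
    rw [Fintype.card_fun, Fintype.card_fin, hF]
    push_cast
    rw [Real.rpow_natCast]
  -- moment bounds
  have hT : ∀ δ : ℝ, 1 ≤ δ → δ ≤ A → (∑ v : Fin n → F, W v ^ δ) ≤ (q:ℝ) ^ (-((δ - 1) * t)) := by
    intro δ hδ1 hδA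
    have hA1' : A - 1 ≠ 0 := ne_of_gt (by linarith : (0:ℝ) < A - 1)
    calc ∑ v : Fin n → F, W v ^ δ
        ≤ (∑ v : Fin n → F, W v ^ A) ^ ((δ - 1) / (A - 1)) :=
          interp_moment W hW h1 hδ1 hδA hA1
      _ ≤ ((q:ℝ) ^ (-((A - 1) * t))) ^ ((δ - 1) / (A - 1)) :=
          Real.rpow_le_rpow (Finset.sum_nonneg fun v _ => Real.rpow_nonneg (hW v) A)
            hrate (div_nonneg (by linarith) (by linarith))
      _ = (q:ℝ) ^ (-((δ - 1) * t)) := by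
          rw [← Real.rpow_mul hQ0.le]
          congr 1
          field_simp
  -- the rate condition forces `ε n ≤ k`
  have hεk : ε * (n:ℝ) ≤ (k:ℝ) := by
    have hlow : (q:ℝ) ^ ((n:ℝ) * (1 - A)) ≤ ∑ v : Fin n → F, W v ^ A := by
      have hml := moment_lower W hW h1 hA1.le
      rwa [hcV, ← Real.rpow_mul hQ0.le] at hml
    have hcmp : (n:ℝ) * (1 - A) ≤ -((A - 1) * t) :=
      (Real.rpow_le_rpow_left_iff hQ1).mp (le_trans hlow hrate)
    rw [htdef] at hcmp
    have h5 : 0 ≤ (A - 1) * ((k:ℝ) - ε * n) := by nlinarith [hcmp]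
    nlinarith [h5, hA1]
  -- the combinatorial reduction
  set pc := Finset.powersetCard d' (Finset.univ : Finset (Fin r)) with hpc
  set M : ℝ := (q:ℝ) ^ (-((A - (d':ℝ) - 1) * t))
      + (Fintype.card (Fin n → F) : ℝ) * (q:ℝ) ^ (-((A - (d':ℝ)) * t)) with hM
  have hScore : ∀ I ∈ pc, ∀ lam : Fin r → Fin r → F,
      (∑ y : Fin n → F, ∑ g : {i : Fin r // i ∈ I} → (Fin n → F),
        ∏ i, W (y - Dmap I lam g i) ^ a i) ≤ M := by
    intro I hI lam
    have hIcard : I.card = d' := Finset.mem_powersetCard_univ.mp hI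
    have hInep : I.Nonempty := Finset.card_pos.mp (by rw [hIcard]; exact hd'pos)
    have hIcnep : Iᶜ.Nonempty := by
      refine Finset.card_pos.mp ?_
      rw [Finset.card_compl, hIcard, Fintype.card_fin]
      omega
    have hcb := core_bound W hW a ha1 A hA_sum (q:ℝ) t hQ1 ht0 hT I hInep hIcnep lam
    rwa [hIcard, ← hM] at hcb
  have hSbound : (∑ y : Fin n → F, ∑ c ∈ Finset.univ.filter
        (fun c : Fin r → (Fin n → F) =>
          Function.Injective c ∧ (∀ i, c i ≠ 0) ∧
            Module.finrank F (Submodule.span F (Set.range c)) = r - j),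
        ∏ i, W (y - c i) ^ a i)
      ≤ (pc.card : ℝ) * ((Fintype.card (Fin r → Fin r → F) : ℝ) * M) := by
    calc ∑ y : Fin n → F, ∑ c ∈ Finset.univ.filter
          (fun c : Fin r → (Fin n → F) =>
            Function.Injective c ∧ (∀ i, c i ≠ 0) ∧
              Module.finrank F (Submodule.span F (Set.range c)) = r - j),
          ∏ i, W (y - c i) ^ a i
        ≤ ∑ y : Fin n → F, ∑ I ∈ pc, ∑ lam : Fin r → Fin r → F,
            ∑ g : {i : Fin r // i ∈ I} → (Fin n → F), ∏ i, W (y - Dmap I lam g i) ^ a i := by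
          refine Finset.sum_le_sum fun y _ => ?_
          refine encode_bound (d := r - j) _ ?_ (fun i v => W (y - v) ^ a i)
            (fun i v => Real.rpow_nonneg (hW _) _)
          intro c hc
          have hc' := (Finset.mem_filter.mp hc).2
          exact ⟨hc'.1, hc'.2.2⟩
      _ = ∑ I ∈ pc, ∑ y : Fin n → F, ∑ lam : Fin r → Fin r → F,
            ∑ g : {i : Fin r // i ∈ I} → (Fin n → F), ∏ i, W (y - Dmap I lam g i) ^ a i :=
          Finset.sum_comm
      _ = ∑ I ∈ pc, ∑ lam : Fin r → Fin r → F, ∑ y : Fin n → F,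
            ∑ g : {i : Fin r // i ∈ I} → (Fin n → F), ∏ i, W (y - Dmap I lam g i) ^ a i :=
          Finset.sum_congr rfl fun I _ => Finset.sum_comm
      _ ≤ ∑ I ∈ pc, ∑ _lam : Fin r → Fin r → F, M := by
          refine Finset.sum_le_sum fun I hI => Finset.sum_le_sum fun lam _ => ?_
          exact hScore I hI lam
      _ = (pc.card : ℝ) * ((Fintype.card (Fin r → Fin r → F) : ℝ) * M) := by
          rw [Finset.sum_const, Finset.sum_const, Finset.card_univ, nsmul_eq_mul, nsmul_eq_mul]
  -- numeric part
  have hqk : ((q:ℝ))^k = (q:ℝ) ^ ((k:ℝ)) := (Real.rpow_natCast _ k).symm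
  have hqn : ((q:ℝ))^n = (q:ℝ) ^ ((n:ℝ)) := (Real.rpow_natCast _ n).symm
  have hden : (0:ℝ) < (q:ℝ)^n - 1 := by
    have h := one_lt_pow₀ hQ1 (by omega : n ≠ 0)
    linarith
  have hnum : (0:ℝ) ≤ (q:ℝ)^k - 1 := by
    have h : (1:ℝ) ≤ (q:ℝ)^k := one_le_pow₀ hQ1.le
    linarith
  have hmid : (q:ℝ) ^ ((n:ℝ) - 1) ≤ (q:ℝ)^n - 1 := by
    have e : (q:ℝ) ^ ((n:ℝ) - 1) * (q:ℝ) = (q:ℝ)^n := by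
      calc (q:ℝ) ^ ((n:ℝ) - 1) * (q:ℝ) = (q:ℝ) ^ (((n:ℝ) - 1) + 1) :=
            (Real.rpow_add_one hQ0.ne' _).symm
        _ = (q:ℝ)^n := by rw [sub_add_cancel, hqn]
    have h1' : (1:ℝ) ≤ (q:ℝ) ^ ((n:ℝ) - 1) := by
      have h := Real.rpow_le_rpow_of_exponent_le hQ1.le (by linarith : (0:ℝ) ≤ (n:ℝ) - 1)
      rwa [Real.rpow_zero] at h
    have h2' : (2:ℝ) ≤ (q:ℝ) := by exact_mod_cast hq2
    nlinarith [e, h1']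
  have hratio : ((q:ℝ)^k - 1) / ((q:ℝ)^n - 1) ≤ (q:ℝ) ^ ((k:ℝ) - (n:ℝ) + 1) := by
    rw [div_le_iff₀ hden]
    have e2 : (q:ℝ) ^ ((k:ℝ) - (n:ℝ) + 1) * (q:ℝ) ^ ((n:ℝ) - 1) = (q:ℝ)^k := by
      rw [← Real.rpow_add hQ0, hqk]
      congr 1
      ring
    calc (q:ℝ)^k - 1 ≤ (q:ℝ)^k := by linarith
      _ = (q:ℝ) ^ ((k:ℝ)-(n:ℝ)+1) * (q:ℝ) ^ ((n:ℝ)-1) := e2.symm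
      _ ≤ (q:ℝ) ^ ((k:ℝ)-(n:ℝ)+1) * ((q:ℝ)^n - 1) :=
          mul_le_mul_of_nonneg_left hmid (Real.rpow_nonneg hQ0.le _)
  have hRatPow : (((q:ℝ)^k - 1) / ((q:ℝ)^n - 1)) ^ d'
      ≤ (q:ℝ) ^ (((k:ℝ) - (n:ℝ) + 1) * (d':ℝ)) := by
    calc (((q:ℝ)^k - 1) / ((q:ℝ)^n - 1)) ^ d'
        ≤ ((q:ℝ) ^ ((k:ℝ) - (n:ℝ) + 1)) ^ d' :=
          pow_le_pow_left₀ (div_nonneg hnum hden.le) hratio d'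
      _ = (q:ℝ) ^ (((k:ℝ) - (n:ℝ) + 1) * (d':ℝ)) := by
          rw [← Real.rpow_natCast ((q:ℝ) ^ ((k:ℝ)-(n:ℝ)+1)) d', ← Real.rpow_mul hQ0.le]
  set E1 : ℝ := (n:ℝ) * (A - 1) - (k:ℝ) * A with hE1
  set E2 : ℝ := E1 + ((k:ℝ) - (n:ℝ) + 1) * (d':ℝ) with hE2
  have hpre : (q:ℝ) ^ E1 * (((q:ℝ)^k - 1) / ((q:ℝ)^n - 1)) ^ d' ≤ (q:ℝ) ^ E2 := by
    calc (q:ℝ)^E1 * (((q:ℝ)^k-1)/((q:ℝ)^n-1))^d'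
        ≤ (q:ℝ)^E1 * (q:ℝ)^(((k:ℝ)-(n:ℝ)+1)*(d':ℝ)) :=
          mul_le_mul_of_nonneg_left hRatPow (Real.rpow_nonneg hQ0.le _)
      _ = (q:ℝ)^E2 := (Real.rpow_add hQ0 _ _).symm
  have hAd1 : 0 ≤ A - (d':ℝ) - 1 := by rw [hdR]; linarith [hAr, hj1]
  have hAd : 1 ≤ A - (d':ℝ) := by rw [hdR]; linarith [hAr, hj1]
  have hdr' : (d':ℝ) ≤ (r:ℝ) := by exact_mod_cast hd'le
  have hb1 : E2 + -((A - (d':ℝ) - 1) * t) ≤ (r:ℝ) + -(ε * (n:ℝ)) := by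
    have hid : E2 + -((A - (d':ℝ) - 1) * t)
        = (d':ℝ) - (k:ℝ) - (A - (d':ℝ) - 1) * (ε * (n:ℝ)) := by
      rw [hE2, hE1, htdef]; ring
    rw [hid]
    have h7 := mul_nonneg hAd1 hεn0
    linarith [hεk]
  have hb2 : E2 + ((n:ℝ) + -((A - (d':ℝ)) * t)) ≤ (r:ℝ) + -(ε * (n:ℝ)) := by
    have hid : E2 + ((n:ℝ) + -((A - (d':ℝ)) * t))
        = (d':ℝ) - (A - (d':ℝ)) * (ε * (n:ℝ)) := by
      rw [hE2, hE1, htdef]; ring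
    rw [hid]
    have h6 : ε * (n:ℝ) ≤ (A - (d':ℝ)) * (ε * (n:ℝ)) := le_mul_of_one_le_left hεn0 hAd
    linarith
  have hQM : (q:ℝ) ^ E2 * M ≤ 2 * ((q:ℝ)^r * (q:ℝ) ^ (-(ε * (n:ℝ)))) := by
    have hexp : (q:ℝ)^E2 * M = (q:ℝ) ^ (E2 + -((A - (d':ℝ) - 1) * t))
        + (q:ℝ) ^ (E2 + ((n:ℝ) + -((A - (d':ℝ)) * t))) := by
      rw [hM, mul_add]
      congr 1
      · rw [← Real.rpow_add hQ0]
      · rw [hcV, ← Real.rpow_add hQ0, ← Real.rpow_add hQ0]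
    have hcol : (q:ℝ) ^ ((r:ℝ) + -(ε * (n:ℝ))) = (q:ℝ)^r * (q:ℝ) ^ (-(ε * (n:ℝ))) := by
      rw [Real.rpow_add hQ0, Real.rpow_natCast]
    calc (q:ℝ)^E2 * M = (q:ℝ) ^ (E2 + -((A - (d':ℝ) - 1) * t))
          + (q:ℝ) ^ (E2 + ((n:ℝ) + -((A - (d':ℝ)) * t))) := hexp
      _ ≤ (q:ℝ) ^ ((r:ℝ) + -(ε * (n:ℝ))) + (q:ℝ) ^ ((r:ℝ) + -(ε * (n:ℝ))) :=
          add_le_add (Real.rpow_le_rpow_of_exponent_le hQ1.le hb1)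
            (Real.rpow_le_rpow_of_exponent_le hQ1.le hb2)
      _ = 2 * ((q:ℝ)^r * (q:ℝ) ^ (-(ε * (n:ℝ)))) := by rw [hcol]; ring
  have hSnn : (0:ℝ) ≤ ∑ y : Fin n → F, ∑ c ∈ Finset.univ.filter
        (fun c : Fin r → (Fin n → F) =>
          Function.Injective c ∧ (∀ i, c i ≠ 0) ∧
            Module.finrank F (Submodule.span F (Set.range c)) = r - j),
        ∏ i, W (y - c i) ^ a i :=
    Finset.sum_nonneg fun y _ => Finset.sum_nonneg fun c _ =>
      Finset.prod_nonneg fun i _ => Real.rpow_nonneg (hW _) _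
  have hMnn : (0:ℝ) ≤ M := by
    rw [hM]
    positivity
  calc (q:ℝ)^E1 * (((q:ℝ)^k - 1) / ((q:ℝ)^n - 1)) ^ d' *
        (∑ y : Fin n → F, ∑ c ∈ Finset.univ.filter
          (fun c : Fin r → (Fin n → F) =>
            Function.Injective c ∧ (∀ i, c i ≠ 0) ∧
              Module.finrank F (Submodule.span F (Set.range c)) = r - j),
          ∏ i, W (y - c i) ^ a i)
      ≤ (q:ℝ)^E2 * ((pc.card : ℝ) * ((Fintype.card (Fin r → Fin r → F) : ℝ) * M)) :=
        mul_le_mul hpre hSbound hSnn (Real.rpow_nonneg hQ0.le _)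
    _ = (pc.card : ℝ) * (Fintype.card (Fin r → Fin r → F) : ℝ) * ((q:ℝ)^E2 * M) := by
        ring
    _ ≤ (pc.card : ℝ) * (Fintype.card (Fin r → Fin r → F) : ℝ) *
          (2 * ((q:ℝ)^r * (q:ℝ) ^ (-(ε * (n:ℝ))))) := by
        refine mul_le_mul_of_nonneg_left hQM ?_
        positivity
    _ = 2 * (r.choose d' : ℝ) * (q:ℝ)^(r*r) * (q:ℝ)^r * (q:ℝ) ^ (-(ε * (n:ℝ))) := by
        have hK1 : pc.card = r.choose d' := by
          rw [hpc, Finset.card_powersetCard, Finset.card_univ, Fintype.card_fin]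
        have hK2 : Fintype.card (Fin r → Fin r → F) = q ^ (r*r) := by
          rw [Fintype.card_fun, Fintype.card_fun, Fintype.card_fin, hF, ← pow_mul]
        rw [hK1, hK2]
        push_cast
        ring
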